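/- Let A be an m×n real matrix, P invertible, Q = AP, B = P(I − Q⁺Q). Then the rank of B Bᵀ equals n − rank(A). In particular, the posterior covariance K − K Aᵀ (A K Aᵀ)⁺ A K (with K = PPᵀ) has rank equal to the dimension of the null space of A. -/
import Mathlib


open Matrix Real

/-- The four Penrose conditions characterizing the Moore-Penrose pseudoinverse. -/
def IsMoorePenrose {m n : Type*} [Fintype m] [Fintype n]
    (Q : Matrix m n ℝ) (Qp : Matrix n m ℝ) : Prop :=
  Q * Qp * Q = Q ∧ Qp * Q * Qp = Qp ∧ (Q * Qp)ᵀ = Q * Qp ∧ (Qp * Q)ᵀ = Qp * Q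

/-- Uniqueness of the Moore-Penrose pseudoinverse. -/
lemma mp_unique {m n : Type*} [Fintype m] [Fintype n]
    {Q : Matrix m n ℝ} {Y Z : Matrix n m ℝ}
    (hY : IsMoorePenrose Q Y) (hZ : IsMoorePenrose Q Z) : Y = Z := by
  obtain ⟨hY1, hY2, hY3, hY4⟩ := hY
  obtain ⟨hZ1, hZ2, hZ3, hZ4⟩ := hZ
  have sY : Yᵀ * Qᵀ = Q * Y := by rw [← transpose_mul, hY3]
  have sZ : Zᵀ * Qᵀ = Q * Z := by rw [← transpose_mul, hZ3]
  have tY : Qᵀ * Yᵀ = Y * Q := by rw [← transpose_mul, hY4]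
  have tZ : Qᵀ * Zᵀ = Z * Q := by rw [← transpose_mul, hZ4]
  have hQY : Q * Y = Q * Z := by
    calc Q * Y = Yᵀ * Qᵀ := sY.symm
    _ = Yᵀ * (Q * Z * Q)ᵀ := by rw [hZ1]
    _ = Yᵀ * (Qᵀ * (Q * Z)ᵀ) := by rw [transpose_mul]
    _ = (Yᵀ * Qᵀ) * (Q * Z) := by rw [hZ3, ← Matrix.mul_assoc]
    _ = Q * Y * (Q * Z) := by rw [sY]
    _ = (Q * Y * Q) * Z := (Matrix.mul_assoc _ _ _).symm
    _ = Q * Z := by rw [hY1]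
  have hYQ : Y * Q = Z * Q := by
    calc Y * Q = Qᵀ * Yᵀ := tY.symm
    _ = (Q * Z * Q)ᵀ * Yᵀ := by rw [hZ1]
    _ = Qᵀ * (Zᵀ * Qᵀ) * Yᵀ := by rw [transpose_mul, transpose_mul]
    _ = (Qᵀ * Zᵀ) * (Qᵀ * Yᵀ) := by simp only [Matrix.mul_assoc]
    _ = (Z * Q) * (Y * Q) := by rw [tY, tZ]
    _ = Z * (Q * Y * Q) := by simp only [Matrix.mul_assoc]
    _ = Z * Q := by rw [hY1]
  calc Y = Y * Q * Y := hY2.symm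
  _ = Z * Q * Y := by rw [hYQ]
  _ = Z * (Q * Y) := Matrix.mul_assoc _ _ _
  _ = Z * (Q * Z) := by rw [hQY]
  _ = Z * Q * Z := (Matrix.mul_assoc _ _ _).symm
  _ = Z := hZ2

lemma mp_transpose {m n : Type*} [Fintype m] [Fintype n]
    {Q : Matrix m n ℝ} {Y : Matrix n m ℝ} (hY : IsMoorePenrose Q Y) :
    IsMoorePenrose Qᵀ Yᵀ := by
  obtain ⟨h1, h2, h3, h4⟩ := hY
  refine ⟨?_, ?_, ?_, ?_⟩
  · rw [Matrix.mul_assoc, ← transpose_mul, ← transpose_mul, h1]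
  · rw [Matrix.mul_assoc, ← transpose_mul, ← transpose_mul, h2]
  · rw [← transpose_mul, transpose_transpose]; exact h4.symm
  · rw [← transpose_mul, transpose_transpose]; exact h3.symm

/-- The pseudoinverse of a symmetric real matrix is symmetric. -/
lemma mp_symm {n : Type*} [Fintype n] {M : Matrix n n ℝ} (hM : Mᵀ = M)
    {W : Matrix n n ℝ} (hW : IsMoorePenrose M W) : Wᵀ = W := by
  have := mp_transpose hW
  rw [hM] at this
  exact mp_unique this hW

lemma real_mul_self_transpose_eq_zero {m n : Type*} [Fintype m] [Fintype n]
    {N : Matrix m n ℝ} (h : N * Nᵀ = 0) : N = 0 := by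
  have h' : (Nᵀ)ᴴ * Nᵀ = 0 := by
    rwa [conjTranspose_eq_transpose_of_trivial, transpose_transpose]
  have := Matrix.conjTranspose_mul_self_eq_zero.mp h'
  simpa using congrArg Matrix.transpose this

/-- If `W` is a pseudoinverse of `Q * Qᵀ`, then `Q * Qᵀ * W * Q = Q`. -/
lemma mp_gram_cancel {m n : Type*} [Fintype m] [Fintype n]
    {Q : Matrix m n ℝ} {W : Matrix m m ℝ} (hW : IsMoorePenrose (Q * Qᵀ) W) :
    Q * Qᵀ * W * Q = Q := by
  obtain ⟨h1, h2, h3, h4⟩ := hW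
  have expand : (Q - Q * Qᵀ * W * Q) * (Q - Q * Qᵀ * W * Q)ᵀ = 0 := by
    have ht : (Q * Qᵀ * W * Q)ᵀ = Qᵀ * (Q * Qᵀ * W) := by
      rw [transpose_mul, h3]
    rw [transpose_sub, ht, Matrix.sub_mul, Matrix.mul_sub, Matrix.mul_sub]
    have e1 : Q * (Qᵀ * (Q * Qᵀ * W)) = Q * Qᵀ * (Q * Qᵀ * W) := by
      rw [← Matrix.mul_assoc]
    have e2 : Q * Qᵀ * W * Q * Qᵀ = Q * Qᵀ := by
      rw [Matrix.mul_assoc (Q * Qᵀ * W)]; exact h1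
    have e3 : Q * Qᵀ * W * Q * (Qᵀ * (Q * Qᵀ * W)) = Q * Qᵀ * (Q * Qᵀ * W) := by
      rw [← Matrix.mul_assoc, e2]
    rw [e1, e2, e3]
    abel
  have := real_mul_self_transpose_eq_zero expand
  rw [sub_eq_zero] at this
  exact this.symm

/-- Key identity: `Qᵀ * W * Q = Qp * Q` when `Qp` is MP of `Q` and `W` is MP of `Q Qᵀ`. -/
lemma mp_proj {m n : Type*} [Fintype m] [Fintype n]
    {Q : Matrix m n ℝ} {Qp : Matrix n m ℝ} {W : Matrix m m ℝ}
    (hQp : IsMoorePenrose Q Qp) (hW : IsMoorePenrose (Q * Qᵀ) W) :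
    Qᵀ * W * Q = Qp * Q := by
  have hMsymm : (Q * Qᵀ)ᵀ = Q * Qᵀ := by rw [transpose_mul, transpose_transpose]
  have hWsymm : Wᵀ = W := mp_symm hMsymm hW
  have hcancel : Q * Qᵀ * W * Q = Q := mp_gram_cancel hW
  obtain ⟨g1, g2, g3, g4⟩ := hW
  have hQtW : IsMoorePenrose Q (Qᵀ * W) := by
    refine ⟨?_, ?_, ?_, ?_⟩
    · rw [← Matrix.mul_assoc]; exact hcancel
    · rw [show Qᵀ * W * Q * (Qᵀ * W) = Qᵀ * (W * (Q * Qᵀ) * W) by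
        simp only [Matrix.mul_assoc], g2]
    · rw [show Q * (Qᵀ * W) = Q * Qᵀ * W from (Matrix.mul_assoc _ _ _).symm, g3]
    · rw [transpose_mul, transpose_mul, transpose_transpose, hWsymm]
      simp only [Matrix.mul_assoc]
  rw [mp_unique hQtW hQp]

/-- The rank of `1 - E` for an idempotent `E`. -/
lemma rank_one_sub_idem {n : Type*} [Fintype n] [DecidableEq n]
    {E : Matrix n n ℝ} (h : E * E = E) :
    (1 - E).rank = Fintype.card n - E.rank := by
  have hadd : (1 - E).mulVecLin + E.mulVecLin = LinearMap.id := by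
    rw [← Matrix.mulVecLin_add, sub_add_cancel, Matrix.mulVecLin_one]
  have hml : (1 - E).mulVecLin = LinearMap.id - E.mulVecLin :=
    eq_sub_of_add_eq hadd
  have hrange : LinearMap.range (1 - E).mulVecLin = LinearMap.ker E.mulVecLin := by
    rw [hml]
    ext x
    constructor
    · rintro ⟨y, rfl⟩
      have hy : E.mulVecLin (E.mulVecLin y) = E.mulVecLin y := by
        rw [← LinearMap.comp_apply, ← Matrix.mulVecLin_mul, h]
      simp only [LinearMap.mem_ker, LinearMap.sub_apply, LinearMap.id_apply, map_sub, hy,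
        sub_self]
    · intro hx
      rw [LinearMap.mem_ker] at hx
      exact ⟨x, by simp [hx]⟩
  have hrn := LinearMap.finrank_range_add_finrank_ker E.mulVecLin
  rw [Module.finrank_pi] at hrn
  have h1 : (1 - E).rank = Module.finrank ℝ (LinearMap.ker E.mulVecLin) := by
    rw [Matrix.rank, hrange]
  have h2 : E.rank = Module.finrank ℝ (LinearMap.range E.mulVecLin) := rfl
  omega

theorem posterior_cov_rank {m n : Type*} [Fintype m] [Fintype n] [DecidableEq n]
    (A : Matrix m n ℝ) (P : Matrix n n ℝ) (hP : IsUnit P.det)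
    (Qp : Matrix n m ℝ) (W : Matrix m m ℝ)
    (hQp : IsMoorePenrose (A * P) Qp)
    (hW : IsMoorePenrose (A * (P * Pᵀ) * Aᵀ) W) :
    ((P * (1 - Qp * (A * P))) * (P * (1 - Qp * (A * P)))ᵀ).rank
        = Fintype.card n - A.rank ∧
    ((P * Pᵀ) - (P * Pᵀ) * Aᵀ * W * A * (P * Pᵀ)).rank
        = Module.finrank ℝ (LinearMap.ker A.mulVecLin) := by
  obtain ⟨h1, h2, h3, h4⟩ := hQp
  -- E := Qp * (A * P) is a symmetric idempotent with rank equal to rank A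
  have hEidem : (Qp * (A * P)) * (Qp * (A * P)) = Qp * (A * P) := by
    rw [show Qp * (A * P) * (Qp * (A * P)) = Qp * (A * P * Qp * (A * P)) by
      simp only [Matrix.mul_assoc], h1]
  have hrankQ : (A * P).rank = A.rank :=
    Matrix.rank_mul_eq_left_of_isUnit_det P A hP
  have hrankE : (Qp * (A * P)).rank = A.rank := by
    refine le_antisymm ?_ ?_
    · calc (Qp * (A * P)).rank ≤ (A * P).rank := Matrix.rank_mul_le_right Qp (A * P)
      _ = A.rank := hrankQ
    · calc A.rank = (A * P).rank := hrankQ.symm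
      _ = ((A * P) * (Qp * (A * P))).rank := by
          rw [show (A * P) * (Qp * (A * P)) = A * P * Qp * (A * P) from
            (Matrix.mul_assoc _ _ _).symm, h1]
      _ ≤ (Qp * (A * P)).rank := Matrix.rank_mul_le_right _ _
  have hrank1E : (1 - Qp * (A * P)).rank = Fintype.card n - A.rank := by
    rw [rank_one_sub_idem hEidem, hrankE]
  have hBrank : ((P * (1 - Qp * (A * P))) * (P * (1 - Qp * (A * P)))ᵀ).rank
      = Fintype.card n - A.rank := by
    rw [Matrix.rank_self_mul_transpose,
      Matrix.rank_mul_eq_right_of_isUnit_det P _ hP, hrank1E]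
  refine ⟨hBrank, ?_⟩
  -- Turn W into a pseudoinverse of (A*P)*(A*P)ᵀ
  rw [show A * (P * Pᵀ) * Aᵀ = (A * P) * (A * P)ᵀ by
    rw [transpose_mul]; simp only [Matrix.mul_assoc]] at hW
  have hproj : (A * P)ᵀ * W * (A * P) = Qp * (A * P) := mp_proj ⟨h1, h2, h3, h4⟩ hW
  -- Identity of the two matrices
  have hone : (1 - Qp * (A * P)) * (1 - Qp * (A * P)) = 1 - Qp * (A * P) := by
    rw [Matrix.mul_sub, Matrix.mul_one, Matrix.sub_mul, Matrix.one_mul, hEidem]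
    abel
  have hBB : (P * (1 - Qp * (A * P))) * (P * (1 - Qp * (A * P)))ᵀ
      = P * ((1 - Qp * (A * P)) * Pᵀ) := by
    rw [transpose_mul, transpose_sub, transpose_one, h4]
    rw [show P * (1 - Qp * (A * P)) * ((1 - Qp * (A * P)) * Pᵀ)
        = P * ((1 - Qp * (A * P)) * (1 - Qp * (A * P)) * Pᵀ) by
      simp only [Matrix.mul_assoc], hone]
  have hKey : (P * Pᵀ) - (P * Pᵀ) * Aᵀ * W * A * (P * Pᵀ)
      = (P * (1 - Qp * (A * P))) * (P * (1 - Qp * (A * P)))ᵀ := by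
    have h5 : (P * Pᵀ) * Aᵀ * W * A * (P * Pᵀ)
        = P * ((A * P)ᵀ * W * (A * P) * Pᵀ) := by
      rw [transpose_mul]; simp only [Matrix.mul_assoc]
    rw [hBB, h5, hproj, Matrix.sub_mul, Matrix.one_mul, Matrix.mul_sub]
  rw [hKey, hBrank]
  -- card n - rank A = finrank of the kernel of A
  have hrn := LinearMap.finrank_range_add_finrank_ker A.mulVecLin
  rw [Module.finrank_pi] at hrn
  have hAR : A.rank = Module.finrank ℝ (LinearMap.range A.mulVecLin) := rfl
  omega
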